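/- Fix an integer m ≥ 1 and let u_m = (m+1)^{m+1}/m^m. Then lim_{k→∞} [(k(m+1))! / (k! (mk+1)!)] · k^{3/2} · u_m^{-k} = √((m+1)/(2π m³)). Equivalently, the Fuss–Catalan number FC_m(k) = (1/(mk+1)) C(mk+k, k) satisfies FC_m(k) ~ √((m+1)/(2π m³)) · u_m^{k} · k^{-3/2} as k → ∞. -/

import Mathlib

open Filter

section aux

open Real Stirling

private lemma stmt11_pow_aux (m k : ℕ) (e M : ℝ) (he : e ≠ 0) (hm0 : (0:ℝ) < m) :
    ((k:ℝ)*M/e)^(k*(m+1)) =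
      ((k:ℝ)/e)^k * (((m:ℝ)*k)/e)^(m*k) * ((M^(m+1))/(m:ℝ)^m)^k := by
  have hmm : (m:ℝ)^m ≠ 0 := by positivity
  field_simp
  ring_nf
  rw [mul_assoc _ ((m:ℝ)^(k*m)), ← mul_pow, mul_inv_cancel₀ hm0.ne', one_pow, mul_one]

private lemma stmt11_fact_aux (n : ℕ) (hn : 1 ≤ n) :
    (n.factorial : ℝ) = stirlingSeq n * (Real.sqrt (2*(n:ℝ)) * ((n:ℝ)/Real.exp 1)^n) := by
  have hn0 : (0:ℝ) < n := by exact_mod_cast hn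
  rw [stirlingSeq, div_mul_cancel₀]
  positivity

private lemma stmt11_spos (n : ℕ) (hn : 1 ≤ n) : 0 < stirlingSeq n := by
  obtain ⟨j, rfl⟩ := Nat.exists_eq_add_of_le hn
  rw [add_comm]
  exact stirlingSeq'_pos j

end aux

theorem stmt11 (m : ℕ) (hm : 1 ≤ m) :
    Tendsto
      (fun k : ℕ =>
        (((k * (m + 1)).factorial : ℝ) / ((k.factorial : ℝ) * ((m * k + 1).factorial : ℝ))) *
          (k : ℝ) ^ ((3 : ℝ) / 2) *
          ((((m : ℝ) + 1) ^ (m + 1) / (m : ℝ) ^ m) ^ k)⁻¹)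
      atTop (nhds (Real.sqrt (((m : ℝ) + 1) / (2 * Real.pi * (m : ℝ) ^ 3)))) := by
  have hm0 : (0:ℝ) < m := by exact_mod_cast hm
  have hπ : 0 < Real.pi := Real.pi_pos
  have hπne : Real.sqrt Real.pi ≠ 0 := by positivity
  set c : ℝ := Real.sqrt (2*((m:ℝ)+1)) / (Real.sqrt 2 * Real.sqrt (2*(m:ℝ))) with hc
  set g : ℕ → ℝ := fun k =>
    Stirling.stirlingSeq (k*(m+1)) / (Stirling.stirlingSeq k * Stirling.stirlingSeq (m*k)) *
      (c * ((k:ℝ)/((m:ℝ)*k+1))) with hg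
  -- limits
  have hA : Tendsto (fun k : ℕ => k*(m+1)) atTop atTop :=
    tendsto_atTop_mono (fun k => Nat.le_mul_of_pos_right k (by omega)) tendsto_id
  have hC : Tendsto (fun k : ℕ => m*k) atTop atTop :=
    tendsto_atTop_mono (fun k => Nat.le_mul_of_pos_left k (by omega)) tendsto_id
  have hs1 : Tendsto (fun k : ℕ => Stirling.stirlingSeq (k*(m+1))) atTop (nhds (Real.sqrt Real.pi)) :=
    Stirling.tendsto_stirlingSeq_sqrt_pi.comp hA
  have hs3 : Tendsto (fun k : ℕ => Stirling.stirlingSeq (m*k)) atTop (nhds (Real.sqrt Real.pi)) :=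
    Stirling.tendsto_stirlingSeq_sqrt_pi.comp hC
  have hratio : Tendsto
      (fun k : ℕ => Stirling.stirlingSeq (k*(m+1)) /
        (Stirling.stirlingSeq k * Stirling.stirlingSeq (m*k))) atTop
      (nhds ((Real.sqrt Real.pi)⁻¹)) := by
    have h := hs1.div (Stirling.tendsto_stirlingSeq_sqrt_pi.mul hs3)
      (by positivity)
    rwa [div_mul_cancel_left₀ hπne] at h
  have hfrac : Tendsto (fun k : ℕ => (k:ℝ)/((m:ℝ)*k+1)) atTop (nhds ((m:ℝ)⁻¹)) := by
    have h0 : Tendsto (fun k : ℕ => ((m:ℝ) + 1/k)⁻¹) atTop (nhds (((m:ℝ) + 0)⁻¹)) :=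
      (tendsto_const_nhds.add tendsto_one_div_atTop_nhds_zero_nat).inv₀ (by positivity)
    rw [add_zero] at h0
    refine h0.congr' ?_
    filter_upwards [eventually_ge_atTop 1] with k hk
    have hk0 : (0:ℝ) < k := by exact_mod_cast hk
    field_simp
  have hmain : Tendsto g atTop (nhds ((Real.sqrt Real.pi)⁻¹ * (c * (m:ℝ)⁻¹))) :=
    hratio.mul (hfrac.const_mul c)
  -- value equality
  have hval : Real.sqrt (((m:ℝ)+1) / (2 * Real.pi * (m:ℝ)^3)) =
      (Real.sqrt Real.pi)⁻¹ * (c * (m:ℝ)⁻¹) := by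
    have hX0 : (0:ℝ) ≤ (Real.sqrt Real.pi)⁻¹ * (c * (m:ℝ)⁻¹) := by
      rw [hc]; positivity
    have hX2 : ((Real.sqrt Real.pi)⁻¹ * (c * (m:ℝ)⁻¹))^2 =
        ((m:ℝ)+1) / (2 * Real.pi * (m:ℝ)^3) := by
      rw [hc, mul_pow, mul_pow, div_pow, mul_pow, inv_pow, inv_pow,
        Real.sq_sqrt hπ.le, Real.sq_sqrt (by norm_num : (0:ℝ) ≤ 2),
        Real.sq_sqrt (by positivity : (0:ℝ) ≤ 2*((m:ℝ)+1)),
        Real.sq_sqrt (by positivity : (0:ℝ) ≤ 2*(m:ℝ))]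
      field_simp
    rw [← hX2, Real.sqrt_sq hX0]
  rw [hval]
  -- eventual equality
  refine hmain.congr' ?_
  filter_upwards [eventually_ge_atTop 1] with k hk
  have hk0 : (0:ℝ) < k := by exact_mod_cast hk
  have h1 : 1 ≤ k*(m+1) := le_trans hk (Nat.le_mul_of_pos_right k (by omega))
  have h3 : 1 ≤ m*k := le_trans hk (Nat.le_mul_of_pos_left k (by omega))
  have he : Real.exp 1 ≠ 0 := Real.exp_ne_zero 1
  rw [hg]
  show _ = _
  rw [Nat.factorial_succ (m*k), stmt11_fact_aux _ h1, stmt11_fact_aux _ hk]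
  push_cast
  rw [stmt11_fact_aux _ h3]
  push_cast
  rw [show Real.sqrt (2*((k:ℝ)*((m:ℝ)+1))) = Real.sqrt (2*((m:ℝ)+1)) * Real.sqrt k by
      rw [show (2:ℝ)*((k:ℝ)*((m:ℝ)+1)) = (2*((m:ℝ)+1))*(k:ℝ) by ring,
        Real.sqrt_mul (by positivity)],
    show Real.sqrt (2*(k:ℝ)) = Real.sqrt 2 * Real.sqrt k from Real.sqrt_mul (by norm_num) _,
    show Real.sqrt (2*((m:ℝ)*(k:ℝ))) = Real.sqrt (2*(m:ℝ)) * Real.sqrt k by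
      rw [show (2:ℝ)*((m:ℝ)*(k:ℝ)) = (2*(m:ℝ))*(k:ℝ) by ring, Real.sqrt_mul (by positivity)],
    show (k:ℝ)^((3:ℝ)/2) = (k:ℝ) * Real.sqrt k by
      rw [show (3:ℝ)/2 = 1 + 1/2 by norm_num, Real.rpow_add hk0, Real.rpow_one,
        Real.sqrt_eq_rpow],
    stmt11_pow_aux m k (Real.exp 1) ((m:ℝ)+1) he hm0]
  have hS1 : Stirling.stirlingSeq (k*(m+1)) ≠ 0 := (stmt11_spos _ h1).ne'
  have hS2 : Stirling.stirlingSeq k ≠ 0 := (stmt11_spos _ hk).ne'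
  have hS3 : Stirling.stirlingSeq (m*k) ≠ 0 := (stmt11_spos _ h3).ne'
  have hX : ((k:ℝ)/Real.exp 1)^k ≠ 0 := by positivity
  have hY : (((m:ℝ)*k)/Real.exp 1)^(m*k) ≠ 0 := by positivity
  have hU : ((((m:ℝ)+1)^(m+1))/(m:ℝ)^m)^k ≠ 0 := by positivity
  have hM1 : (m:ℝ)*k+1 ≠ 0 := by positivity
  have hsk : Real.sqrt (k:ℝ) ≠ 0 := by positivity
  have hs2' : Real.sqrt 2 ≠ 0 := by positivity
  have hsA : Real.sqrt (2*((m:ℝ)+1)) ≠ 0 := by positivity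
  have hsB : Real.sqrt (2*(m:ℝ)) ≠ 0 := by positivity
  rw [hc]
  field_simp
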